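/- For D = -4, letting q₁ < q₂ < ⋯ be the primes congruent to 3 mod 4 (i.e., primes q with Kronecker symbol (-4/q) = -1), the inequality q_{i+1} < q₁q₂⋯q_i holds for all i ≥ 3. -/

import Mathlib

open Finset

private lemma infinite_three_mod_four :
    {q : ℕ | q.Prime ∧ q % 4 = 3}.Infinite := by
  have h := Nat.infinite_setOfPred_prime_and_eq_mod (q := 4) (a := (3 : ZMod 4)) (by decide)
  have hset : {p : ℕ | p.Prime ∧ (p : ZMod 4) = 3} = {q : ℕ | q.Prime ∧ q % 4 = 3} := by
    ext p
    simp only [Set.mem_setOf_eq, and_congr_right_iff]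
    intro _
    rw [show (3 : ZMod 4) = ((3 : ℕ) : ZMod 4) by rfl, ZMod.natCast_eq_natCast_iff]
    unfold Nat.ModEq
    omega
  rwa [hset] at h

private lemma exists_prime_three_mod_four_dvd :
    ∀ N : ℕ, N % 4 = 3 → ∃ p : ℕ, p.Prime ∧ p % 4 = 3 ∧ p ∣ N := by
  intro N
  induction N using Nat.strong_induction_on with
  | _ N ih =>
    intro hN
    have hN1 : N ≠ 1 := by omega
    obtain ⟨p, pp, pdvd⟩ := Nat.exists_prime_and_dvd hN1
    have hp2 : p ≠ 2 := by
      rintro rfl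
      omega
    have hpodd : p % 2 = 1 := by
      rcases pp.eq_two_or_odd with h | h
      · exact absurd h hp2
      · exact h
    rcases (by omega : p % 4 = 1 ∨ p % 4 = 3) with h1 | h3
    · -- p ≡ 1 mod 4, recurse on N / p
      set M := N / p with hM
      have hMp : M * p = N := Nat.div_mul_cancel pdvd
      have hM4 : M % 4 = 3 := by
        have := Nat.mul_mod M p 4
        rw [hMp, h1] at this
        omega
      have hMlt : M < N := by
        apply Nat.div_lt_self (by omega) pp.one_lt
      obtain ⟨q, hq1, hq2, hq3⟩ := ih M hMlt hM4
      exact ⟨q, hq1, hq2, hq3.trans ⟨p, hMp.symm⟩⟩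
    · exact ⟨p, pp, h3, pdvd⟩

theorem stmt15 :
    ∀ i : ℕ, 3 ≤ i →
      Nat.nth (fun q => q.Prime ∧ q % 4 = 3) i <
        ∏ j ∈ Finset.range i, Nat.nth (fun q => q.Prime ∧ q % 4 = 3) j := by
  intro i hi
  set pr : ℕ → Prop := fun q => q.Prime ∧ q % 4 = 3 with hpr
  have hinf : (setOf pr).Infinite := infinite_three_mod_four
  set P : ℕ := ∏ j ∈ Finset.range i, Nat.nth pr j with hP
  have hmem : ∀ j, pr (Nat.nth pr j) := fun j => Nat.nth_mem_of_infinite hinf j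
  -- each factor is ≥ 3
  have h3le : ∀ j ∈ Finset.range i, 3 ≤ Nat.nth pr j := by
    intro j _
    have := (hmem j).2
    omega
  have hPge : 27 ≤ P := by
    calc (27 : ℕ) = ∏ _j ∈ Finset.range 3, 3 := by simp
    _ ≤ ∏ j ∈ Finset.range i, 3 := by
        apply Finset.prod_le_prod_of_subset_of_one_le'
        · exact Finset.range_subset_range.mpr hi
        · intros; omega
    _ ≤ P := Finset.prod_le_prod (by intros; omega) h3le
  -- P is odd
  have hPodd : ¬ (2 ∣ P) := by
    intro h2
    obtain ⟨j, hj, hdvd⟩ := (Nat.prime_two.prime.dvd_finset_prod_iff _).mp h2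
    have := (hmem j).2
    omega
  have hP2 : P % 2 = 1 := by omega
  -- choose c = 2 or 4 so that (P - c) % 4 = 3
  obtain ⟨c, hc1, hc2, hc3⟩ : ∃ c : ℕ, (c = 2 ∨ c = 4) ∧ (P - c) % 4 = 3 ∧ c < P := by
    rcases (by omega : P % 4 = 1 ∨ P % 4 = 3) with h | h
    · exact ⟨2, Or.inl rfl, by omega, by omega⟩
    · exact ⟨4, Or.inr rfl, by omega, by omega⟩
  obtain ⟨q, hq, hq4, hqdvd⟩ := exists_prime_three_mod_four_dvd (P - c) hc2
  have hqpr : pr q := ⟨hq, hq4⟩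
  -- q is not any of the first i elements
  have hqnew : ∀ j < i, Nat.nth pr j ≠ q := by
    intro j hj heq
    have hdP : q ∣ P := heq ▸ Finset.dvd_prod_of_mem _ (Finset.mem_range.mpr hj)
    have hdc : q ∣ c := by
      have := Nat.dvd_sub hdP hqdvd
      rwa [Nat.sub_sub_self (le_of_lt hc3)] at this
    rcases hc1 with rfl | rfl <;>
    · have h1 := Nat.le_of_dvd (by omega) hdc
      have hq3 : q = 3 := by omega
      rw [hq3] at hdc
      exact absurd hdc (by decide)
  -- hence nth pr i ≤ q
  have hle : Nat.nth pr i ≤ q := by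
    by_contra hlt
    push_neg at hlt
    have hcount : Nat.nth pr (Nat.count pr q) = q := Nat.nth_count hqpr
    have : Nat.count pr q < i := by
      rw [← Nat.nth_lt_nth hinf, hcount]
      exact hlt
    exact hqnew _ this hcount
  have hqle : q ≤ P - c := Nat.le_of_dvd (by omega) hqdvd
  rcases hc1 with rfl | rfl <;> omega
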